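/- Let X_1, …, X_n be independent real-valued random variables such that for each j the law of X_j has a density f_j with respect to Lebesgue measure satisfying f_j ≤ φ almost everywhere, where φ ≥ 1. Let A and B be disjoint finite subsets of {1, …, n} with A ∪ B nonempty, and let α ≥ 0. Then P(|∑_{j ∈ A} X_j − ∑_{j ∈ B} X_j| ≤ α) ≤ 2 · α · φ. -/

import Mathlib

open MeasureTheory ProbabilityTheory

lemma law_Icc_le' {Ω : Type*} [MeasureSpace Ω] (Z : Ω → ℝ) (φ : ℝ) (g : ℝ → ℝ)
    (hlaw : Measure.map Z ℙ = volume.withDensity (fun x => ENNReal.ofReal (g x)))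
    (hb : ∀ᵐ x ∂(volume : Measure ℝ), g x ≤ φ) (a b : ℝ) :
    Measure.map Z ℙ (Set.Icc a b) ≤ ENNReal.ofReal φ * ENNReal.ofReal (b - a) := by
  rw [hlaw, withDensity_apply _ measurableSet_Icc]
  calc ∫⁻ x in Set.Icc a b, ENNReal.ofReal (g x)
      ≤ ∫⁻ _ in Set.Icc a b, ENNReal.ofReal φ := by
        refine lintegral_mono_ae ?_
        filter_upwards [ae_restrict_of_ae hb] with x hx using ENNReal.ofReal_le_ofReal hx
    _ = ENNReal.ofReal φ * volume (Set.Icc a b) := by rw [setLIntegral_const]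
    _ = ENNReal.ofReal φ * ENNReal.ofReal (b - a) := by rw [Real.volume_Icc]

/-- If `X 1, …, X n` are independent real random variables whose laws have densities
bounded by `φ ≥ 1` with respect to Lebesgue measure, and `A`, `B` are disjoint finsets of
indices, not both empty, then for `α ≥ 0`,
`P(|∑_{j ∈ A} X j - ∑_{j ∈ B} X j| ≤ α) ≤ 2 · α · φ`. -/
theorem prob_abs_diff_sum_le {Ω : Type*} [MeasureSpace Ω]
    [IsProbabilityMeasure (ℙ : Measure Ω)]
    (n : ℕ) (X : Fin n → Ω → ℝ) (hmeas : ∀ j, Measurable (X j))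
    (hindep : iIndepFun (m := fun _ => Real.measurableSpace) X ℙ)
    (φ : ℝ) (hφ : 1 ≤ φ) (f : Fin n → ℝ → ℝ)
    (hlaw : ∀ j, Measure.map (X j) ℙ =
      volume.withDensity (fun x => ENNReal.ofReal (f j x)))
    (hbound : ∀ j, ∀ᵐ x ∂(volume : Measure ℝ), f j x ≤ φ)
    (A B : Finset (Fin n)) (hAB : Disjoint A B) (hne : (A ∪ B).Nonempty)
    (α : ℝ) (hα : 0 ≤ α) :
    ℙ {ω | |(∑ j ∈ A, X j ω) - ∑ j ∈ B, X j ω| ≤ α} ≤ ENNReal.ofReal (2 * α * φ) := by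
  classical
  obtain ⟨j0, hj0⟩ := hne
  -- signed variables
  set Y : Fin n → Ω → ℝ := fun j ω => if j ∈ A then X j ω else -X j ω with hY
  have hYmeas : ∀ j, Measurable (Y j) := by
    intro j
    by_cases hj : j ∈ A <;> simp only [hY, hj, if_true, if_false]
    exacts [hmeas j, (hmeas j).neg]
  have hYindep : iIndepFun (m := fun _ => Real.measurableSpace) Y ℙ := by
    have h := hindep.comp (fun j : Fin n => if j ∈ A then (id : ℝ → ℝ) else (fun x => -x))
      (fun i => by by_cases hi : i ∈ A <;> simp only [hi, if_true, if_false] <;>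
        first | exact measurable_id | exact measurable_neg)
    have heq : (fun i => (if i ∈ A then (id : ℝ → ℝ) else fun x => -x) ∘ X i) = Y := by
      funext j ω
      by_cases hj : j ∈ A <;> simp [hY, hj, Function.comp]
    rwa [heq] at h
  set T : Ω → ℝ := fun ω => ∑ j ∈ (A ∪ B).erase j0, Y j ω with hT
  have hTmeas : Measurable T := by
    apply Finset.measurable_sum
    intro j _; exact hYmeas j
  have hTsum : T = ∑ j ∈ (A ∪ B).erase j0, Y j := by
    funext ω; rw [hT]; simp [Finset.sum_apply]
  have hindepYT : IndepFun (Y j0) T ℙ := by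
    rw [hTsum]
    exact (hYindep.indepFun_finset_sum_of_notMem hYmeas (Finset.notMem_erase j0 _)).symm
  -- rewrite the event
  have hev : ∀ ω, (∑ j ∈ A, X j ω) - ∑ j ∈ B, X j ω = Y j0 ω + T ω := by
    intro ω
    have h1 : (∑ j ∈ A ∪ B, Y j ω) = (∑ j ∈ A, X j ω) - ∑ j ∈ B, X j ω := by
      rw [Finset.sum_union hAB]
      have hA : ∑ j ∈ A, Y j ω = ∑ j ∈ A, X j ω :=
        Finset.sum_congr rfl (fun j hj => by simp [hY, hj])
      have hB : ∑ j ∈ B, Y j ω = ∑ j ∈ B, -X j ω :=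
        Finset.sum_congr rfl (fun j hj => by
          have : j ∉ A := Finset.disjoint_right.mp hAB hj
          simp [hY, this])
      rw [hA, hB, Finset.sum_neg_distrib]
      ring
    rw [← h1, ← Finset.add_sum_erase _ _ hj0]
  have hset : {ω | |(∑ j ∈ A, X j ω) - ∑ j ∈ B, X j ω| ≤ α}
      = (fun ω => (Y j0 ω, T ω)) ⁻¹' {p : ℝ × ℝ | |p.1 + p.2| ≤ α} := by
    ext ω
    simp only [Set.mem_setOf_eq, Set.mem_preimage]
    rw [hev ω]
  have hE : MeasurableSet {p : ℝ × ℝ | |p.1 + p.2| ≤ α} := by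
    have : Continuous fun p : ℝ × ℝ => |p.1 + p.2| := by continuity
    exact isClosed_le this continuous_const |>.measurableSet
  have hmap : Measure.map (fun ω => (Y j0 ω, T ω)) ℙ
      = (Measure.map (Y j0) ℙ).prod (Measure.map T ℙ) :=
    (indepFun_iff_map_prod_eq_prod_map_map (hYmeas j0).aemeasurable
      hTmeas.aemeasurable).mp hindepYT
  haveI : IsProbabilityMeasure (Measure.map T ℙ) := Measure.isProbabilityMeasure_map hTmeas.aemeasurable
  -- interval bound for law of Y j0
  have hIcc : ∀ a b : ℝ, Measure.map (Y j0) ℙ (Set.Icc a b)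
      ≤ ENNReal.ofReal φ * ENNReal.ofReal (b - a) := by
    intro a b
    by_cases hj : j0 ∈ A
    · have : Y j0 = X j0 := by funext ω; simp [hY, hj]
      rw [this]
      exact law_Icc_le' _ _ _ (hlaw j0) (hbound j0) a b
    · have hYX : Y j0 = (fun x : ℝ => -x) ∘ X j0 := by funext ω; simp [hY, hj]
      rw [hYX, ← Measure.map_map measurable_neg (hmeas j0),
        Measure.map_apply measurable_neg measurableSet_Icc]
      have : (fun x : ℝ => -x) ⁻¹' Set.Icc a b = Set.Icc (-b) (-a) := by
        ext x; simp [and_comm, neg_le, le_neg]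
      rw [this]
      calc Measure.map (X j0) ℙ (Set.Icc (-b) (-a))
          ≤ ENNReal.ofReal φ * ENNReal.ofReal (-a - -b) :=
            law_Icc_le' _ _ _ (hlaw j0) (hbound j0) _ _
        _ = ENNReal.ofReal φ * ENNReal.ofReal (b - a) := by ring_nf
  calc ℙ {ω | |(∑ j ∈ A, X j ω) - ∑ j ∈ B, X j ω| ≤ α}
      = Measure.map (fun ω => (Y j0 ω, T ω)) ℙ {p : ℝ × ℝ | |p.1 + p.2| ≤ α} := by
        rw [Measure.map_apply ((hYmeas j0).prodMk hTmeas) hE, hset]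
    _ = (Measure.map (Y j0) ℙ).prod (Measure.map T ℙ) {p : ℝ × ℝ | |p.1 + p.2| ≤ α} := by
        rw [hmap]
    _ = ∫⁻ t, Measure.map (Y j0) ℙ ((fun x => (x, t)) ⁻¹' {p : ℝ × ℝ | |p.1 + p.2| ≤ α})
          ∂(Measure.map T ℙ) :=
        Measure.prod_apply_symm hE
    _ ≤ ∫⁻ _t, ENNReal.ofReal (2 * α * φ) ∂(Measure.map T ℙ) := by
        refine lintegral_mono fun t => ?_
        have hpre : (fun x => (x, t)) ⁻¹' {p : ℝ × ℝ | |p.1 + p.2| ≤ α}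
            = Set.Icc (-α - t) (α - t) := by
          ext x; simp only [Set.mem_preimage, Set.mem_setOf_eq, Set.mem_Icc, abs_le]
          constructor <;> intro h <;> constructor <;> linarith [h.1, h.2]
        rw [hpre]
        calc Measure.map (Y j0) ℙ (Set.Icc (-α - t) (α - t))
            ≤ ENNReal.ofReal φ * ENNReal.ofReal ((α - t) - (-α - t)) := hIcc _ _
          _ = ENNReal.ofReal (2 * α * φ) := by
              rw [← ENNReal.ofReal_mul (by linarith)]
              ring_nf
    _ = ENNReal.ofReal (2 * α * φ) := by simp
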